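/- Let L ⊆ ℤ[x]^m be a toric ℤ[x]-lattice, i.e., for every nonzero g ∈ ℤ[x] and u ∈ ℤ[x]^m, g•u ∈ L implies u ∈ L. Then L equals the double orthogonal complement: (L^C)^C = L. (Final part of Lemma 4.3.) -/

import Mathlib

open Polynomial

/-- The orthogonal complement of a `ℤ[x]`-lattice `L ⊆ ℤ[x]^m`. -/
noncomputable def orthComp {m : ℕ} (L : Submodule (Polynomial ℤ) (Fin m → Polynomial ℤ)) :
    Submodule (Polynomial ℤ) (Fin m → Polynomial ℤ) where
  carrier := {f | ∀ g ∈ L, ∑ i, f i * g i = 0}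
  zero_mem' := by intro g hg; simp
  add_mem' := by
    intro a b ha hb g hg
    simp only [Pi.add_apply, add_mul, Finset.sum_add_distrib, ha g hg, hb g hg, add_zero]
  smul_mem' := by
    intro c a ha g hg
    simp only [Pi.smul_apply, smul_eq_mul, mul_assoc, ← Finset.mul_sum, ha g hg, mul_zero]

noncomputable section OrthAux

abbrev Rx : Type := Polynomial ℤ
abbrev Kx : Type := FractionRing Rx

def toK {m : ℕ} (f : Fin m → Rx) : Fin m → Kx := fun i => algebraMap Rx Kx (f i)

lemma toK_inj {m : ℕ} : Function.Injective (toK (m := m)) := by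
  intro f g h
  funext i
  exact IsFractionRing.injective Rx Kx (congrFun h i)

lemma toK_smul {m : ℕ} (a : Rx) (f : Fin m → Rx) : toK (a • f) = a • toK f := by
  funext i; simp [toK, Algebra.smul_def, IsScalarTower.algebraMap_smul]

lemma toK_sum {m n : ℕ} (u : Fin n → (Fin m → Rx)) :
    toK (∑ i, u i) = ∑ i, toK (u i) := by
  funext j; simp [toK]

def dotForm (m : ℕ) : LinearMap.BilinForm Kx (Fin m → Kx) :=
  LinearMap.mk₂ Kx (fun x y => ∑ i, x i * y i)
    (by intros; simp [add_mul, Finset.sum_add_distrib])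
    (by intros; simp [Finset.mul_sum, mul_assoc])
    (by intros; simp [mul_add, Finset.sum_add_distrib])
    (by intros; simp [Finset.mul_sum, mul_left_comm])

lemma dotForm_apply {m : ℕ} (x y : Fin m → Kx) : dotForm m x y = ∑ i, x i * y i := rfl

lemma dotForm_symm {m : ℕ} : (dotForm m).IsSymm := by
  refine LinearMap.BilinForm.isSymm_def.mpr ?_
  intro x y
  simp [dotForm_apply, mul_comm]

lemma dotForm_nondeg {m : ℕ} : (dotForm m).Nondegenerate := by
  refine (LinearMap.IsRefl.nondegenerate_iff_separatingLeft (B := dotForm m) dotForm_symm.isRefl).mpr ?_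
  intro x hx
  funext i
  have := hx (Pi.single i 1)
  simpa [dotForm_apply, Pi.single_apply, mul_ite, Finset.sum_ite_eq'] using this

end OrthAux

/-- Final part of Lemma 4.3: if `L ⊆ ℤ[x]^m` is a toric (`ℤ[x]`-saturated) lattice,
then `(L^C)^C = L`. -/
theorem orthComp_orthComp_eq_self_of_toric
    {m : ℕ} (L : Submodule (Polynomial ℤ) (Fin m → Polynomial ℤ))
    (htoric : ∀ g : Polynomial ℤ, g ≠ 0 → ∀ w : Fin m → Polynomial ℤ, g • w ∈ L → w ∈ L) :
    orthComp (orthComp L) = L := by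
  have inj := IsFractionRing.injective Rx Kx
  apply le_antisymm
  · intro f hf
    set V : Submodule Kx (Fin m → Kx) :=
      Submodule.span Kx (toK '' (L : Set (Fin m → Rx))) with hV
    have key : toK f ∈ (dotForm m).orthogonal ((dotForm m).orthogonal V) := by
      intro v hv
      obtain ⟨b, hb⟩ := IsLocalization.exist_integer_multiples_of_finite
        (nonZeroDivisors Rx) v
      choose w hw using hb
      have hw' : ∀ i, algebraMap Rx Kx (w i) = algebraMap Rx Kx (b : Rx) * v i := by
        intro i; rw [hw i, Algebra.smul_def]
      have hwC : w ∈ orthComp L := by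
        intro g hg
        have hg0 : ∑ i, algebraMap Rx Kx (g i) * v i = 0 := by
          simpa [dotForm_apply, toK] using hv (toK g) (Submodule.subset_span ⟨g, hg, rfl⟩)
        refine (map_eq_zero_iff (algebraMap Rx Kx) inj).mp ?_
        rw [map_sum]
        calc (∑ i, algebraMap Rx Kx (w i * g i))
            = algebraMap Rx Kx (b : Rx) * ∑ i, algebraMap Rx Kx (g i) * v i := by
              rw [Finset.mul_sum]
              refine Finset.sum_congr rfl fun i _ => ?_
              rw [map_mul, hw' i]; ring
        _ = 0 := by rw [hg0, mul_zero]
      have hfw : ∑ i, f i * w i = 0 := hf w hwC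
      show dotForm m v (toK f) = 0
      have hmul : algebraMap Rx Kx (b : Rx) * (∑ i, v i * toK f i) = 0 := by
        rw [Finset.mul_sum]
        calc (∑ i, algebraMap Rx Kx (b : Rx) * (v i * toK f i))
            = algebraMap Rx Kx (∑ i, f i * w i) := by
              rw [map_sum]
              refine Finset.sum_congr rfl fun i _ => ?_
              rw [map_mul, hw' i]; simp only [toK]; ring
        _ = 0 := by rw [hfw, map_zero]
      have hbne : algebraMap Rx Kx (b : Rx) ≠ 0 := by
        simpa [map_eq_zero_iff _ inj] using nonZeroDivisors.coe_ne_zero b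
      rw [dotForm_apply]
      exact (mul_eq_zero.mp hmul).resolve_left hbne
    rw [LinearMap.BilinForm.orthogonal_orthogonal dotForm_nondeg dotForm_symm.isRefl] at key
    rw [hV, Submodule.mem_span_set'] at key
    obtain ⟨n, c, u, hsum⟩ := key
    have hu : ∀ i, ∃ u' ∈ L, toK u' = (u i : Fin m → Kx) := fun i => (u i).2
    choose u' hu'L hu'eq using hu
    obtain ⟨b, hb⟩ := IsLocalization.exist_integer_multiples_of_finite
      (nonZeroDivisors Rx) c
    choose a ha using hb
    have heq : toK ((b : Rx) • f) = toK (∑ i, a i • u' i) := by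
      rw [toK_smul, toK_sum]
      calc (b : Rx) • toK f = (b : Rx) • ∑ i, c i • (u i : Fin m → Kx) := by rw [hsum]
      _ = ∑ i, ((b : Rx) • c i) • (u i : Fin m → Kx) := by
            rw [Finset.smul_sum]
            refine Finset.sum_congr rfl fun i _ => (smul_assoc _ _ _).symm
      _ = ∑ i, toK (a i • u' i) := by
            refine Finset.sum_congr rfl fun i _ => ?_
            rw [← ha i, toK_smul, hu'eq i, IsScalarTower.algebraMap_smul]
    have hmem : (b : Rx) • f ∈ L := by
      rw [toK_inj heq]
      exact Submodule.sum_smul_mem L _ fun i _ => hu'L i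
    exact htoric (b : Rx) (nonZeroDivisors.coe_ne_zero b) f hmem
  · intro u hu g hg
    have h := hg u hu
    calc (∑ i, u i * g i) = ∑ i, g i * u i := by simp_rw [mul_comm]
    _ = 0 := h
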